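/- Let A be a residuated lattice. The following are equivalent: (1) any two distinct minimal prime filters P, Q of A are comaximal, i.e. P ∨ Q = A in the lattice of filters; (2) A is normal; (3) for every prime filter P, D(P) = {a ∈ A | x ∨ a = 1 for some x ∉ P} is a prime filter; (4) for any x, y ∈ A, x ∨ y = 1 implies x^⊥ ∨ y^⊥ = A (join in the lattice of filters); (5) for any x, y ∈ A, x ∨ y = 1 implies there exist u ∈ x^⊥ and v ∈ y^⊥ with u ⊙ v = 0; (6) for any x, y ∈ A, (x ∨ y)^⊥ = x^⊥ ∨ y^⊥; (7) for any x, y ∈ A, (x ∨ y)^⊥ = A implies x^⊥ ∨ y^⊥ = A. -/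

import Mathlib

class ResiduatedLattice (α : Type*) extends Lattice α, CommMonoid α, BoundedOrder α where
  rimp : α → α → α
  one_eq_top : (1 : α) = ⊤
  adjunction : ∀ x y z : α, x * y ≤ z ↔ x ≤ rimp y z

variable {α : Type*} [ResiduatedLattice α]

/-- A filter of a residuated lattice: nonempty, closed under `⊙` and upward closed. -/
def IsFilter (F : Set α) : Prop :=
  F.Nonempty ∧ (∀ x ∈ F, ∀ y ∈ F, x * y ∈ F) ∧ ∀ x ∈ F, ∀ y : α, x ≤ y → y ∈ F

/-- A prime filter: a proper filter such that `x ⊔ y ∈ P` implies `x ∈ P` or `y ∈ P`. -/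
def IsPrimeFilter (P : Set α) : Prop :=
  IsFilter P ∧ P ≠ Set.univ ∧ ∀ x y : α, x ⊔ y ∈ P → x ∈ P ∨ y ∈ P

/-- A `∨`-closed subset: nonempty and closed under join. -/
def IsJoinClosed (C : Set α) : Prop :=
  C.Nonempty ∧ ∀ x ∈ C, ∀ y ∈ C, x ⊔ y ∈ C

/-- The filter generated by a set. -/
def filterGen (X : Set α) : Set α := ⋂₀ {G : Set α | IsFilter G ∧ X ⊆ G}

/-- An `X`-minimal prime filter: prime, contains `X`, minimal among primes containing `X`. -/
def IsMinPrimeOver (X P : Set α) : Prop :=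
  IsPrimeFilter P ∧ X ⊆ P ∧ ∀ Q : Set α, IsPrimeFilter Q → X ⊆ Q → Q ⊆ P → Q = P

/-- `ω_F(X) = {a | x ∨ a ∈ F for some x ∈ X}`. -/
def omegaF (F X : Set α) : Set α := {a : α | ∃ x ∈ X, x ⊔ a ∈ F}

/-- The coannihilator `(F : x) = {a | x ∨ a ∈ F}`. -/
def coann (F : Set α) (x : α) : Set α := {a : α | x ⊔ a ∈ F}

/-- `D_F(H) = {a | x ∨ a ∈ F for some x ∉ H}`, the set of `F`-divisors of `H`. -/
def divisorsF (F H : Set α) : Set α := {a : α | ∃ x ∉ H, x ⊔ a ∈ F}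

/-- A lattice ideal: nonempty, closed under join and downward closed. -/
def IsLatticeIdeal (I : Set α) : Prop :=
  I.Nonempty ∧ (∀ x ∈ I, ∀ y ∈ I, x ⊔ y ∈ I) ∧ ∀ x y : α, x ≤ y → y ∈ I → x ∈ I

/-- The lattice ideal generated by a set. -/
def idealGen (X : Set α) : Set α := ⋂₀ {I : Set α | IsLatticeIdeal I ∧ X ⊆ I}

/-- An `ω_F`-filter: a filter of the form `ω_F(I)` for some lattice ideal `I`. -/
def IsOmegaFilter (F H : Set α) : Prop :=
  IsFilter H ∧ ∃ I : Set α, IsLatticeIdeal I ∧ H = omegaF F I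

/-- A minimal prime filter: a prime filter minimal among all prime filters. -/
def IsMinPrime (P : Set α) : Prop :=
  IsPrimeFilter P ∧ ∀ Q : Set α, IsPrimeFilter Q → Q ⊆ P → Q = P

/-- The coannulet `x^⊥ = {a | x ∨ a = 1}`. -/
def coannulet (x : α) : Set α := {a : α | x ⊔ a = ⊤}

/-- `D(P) = {a | x ∨ a = 1 for some x ∉ P}`, the set of unit divisors of `P`. -/
def unitDivisors (P : Set α) : Set α := {a : α | ∃ x ∉ P, x ⊔ a = ⊤}

/-- `A` is normal: every prime filter contains exactly one minimal prime filter. -/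
def IsNormalRL (α : Type*) [ResiduatedLattice α] : Prop :=
  ∀ P : Set α, IsPrimeFilter P → ∃! m : Set α, IsMinPrime m ∧ m ⊆ P
section Aux
variable {α : Type*} [ResiduatedLattice α]

lemma rl_le_one (a : α) : a ≤ 1 := by
  rw [ResiduatedLattice.one_eq_top]; exact le_top

lemma rl_mul_le_mul_right {b c : α} (a : α) (h : b ≤ c) : b * a ≤ c * a := by
  have h1 : c ≤ ResiduatedLattice.rimp a (c * a) :=
    (ResiduatedLattice.adjunction c a (c * a)).mp le_rfl
  exact (ResiduatedLattice.adjunction b a (c * a)).mpr (le_trans h h1)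

lemma rl_mul_le_mul {a b c d : α} (h1 : a ≤ b) (h2 : c ≤ d) : a * c ≤ b * d := by
  calc a * c ≤ b * c := rl_mul_le_mul_right c h1
    _ = c * b := mul_comm _ _
    _ ≤ d * b := rl_mul_le_mul_right b h2
    _ = b * d := mul_comm _ _

lemma rl_mul_le_left (a b : α) : a * b ≤ a := by
  have := rl_mul_le_mul (le_refl a) (rl_le_one b)
  simpa using this

lemma rl_mul_le_right (a b : α) : a * b ≤ b := by
  rw [mul_comm]; exact rl_mul_le_left b a

lemma rl_mul_sup (a b c : α) : a * (b ⊔ c) = a * b ⊔ a * c := by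
  apply le_antisymm
  · rw [mul_comm]
    refine (ResiduatedLattice.adjunction _ a _).mpr (sup_le ?_ ?_)
    · exact (ResiduatedLattice.adjunction b a _).mp (by rw [mul_comm]; exact le_sup_left)
    · exact (ResiduatedLattice.adjunction c a _).mp (by rw [mul_comm]; exact le_sup_right)
  · exact sup_le (rl_mul_le_mul le_rfl le_sup_left) (rl_mul_le_mul le_rfl le_sup_right)

lemma rl_sup_mul (a b c : α) : (a ⊔ b) * c = a * c ⊔ b * c := by
  rw [mul_comm, rl_mul_sup, mul_comm c a, mul_comm c b]

lemma rl_sup_mul_top {x a b : α} (ha : x ⊔ a = ⊤) (hb : x ⊔ b = ⊤) : x ⊔ a * b = ⊤ := by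
  have h : (x ⊔ a) * (x ⊔ b) ≤ x ⊔ a * b := by
    rw [rl_mul_sup]
    apply sup_le
    · exact (rl_mul_le_right _ x).trans le_sup_left
    · rw [mul_comm, rl_mul_sup]
      apply sup_le
      · exact (rl_mul_le_right b x).trans le_sup_left
      · rw [mul_comm]; exact le_sup_right
  rw [ha, hb] at h
  have : (⊤ : α) * ⊤ = ⊤ := by
    rw [← ResiduatedLattice.one_eq_top, one_mul]
  rw [this] at h
  exact le_antisymm le_top h

end Aux
section Aux2
variable {α : Type*} [ResiduatedLattice α]

lemma IsFilter.top_mem {F : Set α} (hF : IsFilter F) : ⊤ ∈ F := by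
  obtain ⟨⟨a, ha⟩, -, hup⟩ := hF
  exact hup a ha ⊤ le_top

lemma IsFilter.one_mem {F : Set α} (hF : IsFilter F) : (1 : α) ∈ F := by
  rw [ResiduatedLattice.one_eq_top]; exact hF.top_mem

lemma IsFilter.eq_univ_of_bot_mem {F : Set α} (hF : IsFilter F) (h : ⊥ ∈ F) :
    F = Set.univ :=
  Set.eq_univ_of_forall fun a => hF.2.2 ⊥ h a bot_le

lemma IsFilter.pow_mem {F : Set α} (hF : IsFilter F) {a : α} (ha : a ∈ F) :
    ∀ n : ℕ, a ^ n ∈ F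
  | 0 => by simpa using hF.one_mem
  | n + 1 => by
      rw [pow_succ]
      exact hF.2.1 _ (hF.pow_mem ha n) a ha

lemma IsFilter.list_prod_mem {F : Set α} (hF : IsFilter F) :
    ∀ l : List α, (∀ b ∈ l, b ∈ F) → l.prod ∈ F
  | [], _ => by simpa using hF.one_mem
  | b :: l, h => by
      rw [List.prod_cons]
      exact hF.2.1 b (h b (by simp)) l.prod
        (hF.list_prod_mem l fun c hc => h c (by simp [hc]))

lemma IsPrimeFilter.bot_not_mem {P : Set α} (hP : IsPrimeFilter P) : ⊥ ∉ P :=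
  fun h => hP.2.1 (hP.1.eq_univ_of_bot_mem h)

lemma mem_coannulet {x a : α} : a ∈ coannulet x ↔ x ⊔ a = ⊤ := Iff.rfl

lemma top_mem_coannulet (x : α) : (⊤ : α) ∈ coannulet x := by
  simp [coannulet]

lemma isFilter_coannulet (x : α) : IsFilter (coannulet x) := by
  refine ⟨⟨⊤, top_mem_coannulet x⟩, ?_, ?_⟩
  · intro a ha b hb
    exact rl_sup_mul_top ha hb
  · intro a ha b hab
    exact le_antisymm le_top (ha ▸ sup_le_sup_left hab x)

lemma coannulet_subset_sup_left (x y : α) : coannulet x ⊆ coannulet (x ⊔ y) := by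
  intro a ha
  have : (⊤ : α) ≤ (x ⊔ y) ⊔ a := by
    rw [← ha]; exact sup_le_sup_right le_sup_left a
  exact le_antisymm le_top this

lemma coannulet_subset_sup_right (x y : α) : coannulet y ⊆ coannulet (x ⊔ y) := by
  intro a ha
  have : (⊤ : α) ≤ (x ⊔ y) ⊔ a := by
    rw [← ha]; exact sup_le_sup_right le_sup_right a
  exact le_antisymm le_top this

lemma coannulet_top : coannulet (⊤ : α) = Set.univ :=
  Set.eq_univ_of_forall fun a => by simp [coannulet]

lemma subset_filterGen (X : Set α) : X ⊆ filterGen X :=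
  fun a ha G hG => hG.2 ha

lemma filterGen_subset {X F : Set α} (hF : IsFilter F) (hXF : X ⊆ F) :
    filterGen X ⊆ F :=
  Set.sInter_subset_of_mem ⟨hF, hXF⟩

lemma isFilter_prodSet (X : Set α) :
    IsFilter {a : α | ∃ l : List α, (∀ b ∈ l, b ∈ X) ∧ l.prod ≤ a} := by
  refine ⟨⟨⊤, [], by simp, by simp [rl_le_one]⟩, ?_, ?_⟩
  · rintro a ⟨l1, hl1, h1⟩ b ⟨l2, hl2, h2⟩
    refine ⟨l1 ++ l2, ?_, ?_⟩
    · intro c hc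
      rcases List.mem_append.mp hc with h | h
      · exact hl1 c h
      · exact hl2 c h
    · rw [List.prod_append]
      exact rl_mul_le_mul h1 h2
  · rintro a ⟨l, hl, h⟩ b hab
    exact ⟨l, hl, h.trans hab⟩

lemma filterGen_eq (X : Set α) :
    filterGen X = {a : α | ∃ l : List α, (∀ b ∈ l, b ∈ X) ∧ l.prod ≤ a} := by
  apply Set.Subset.antisymm
  · refine filterGen_subset (isFilter_prodSet X) ?_
    intro a ha
    exact ⟨[a], by simpa using ha, by simp⟩
  · rintro a ⟨l, hl, hla⟩ G ⟨hG, hXG⟩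
    exact hG.2.2 _ (hG.list_prod_mem l fun b hb => hXG (hl b hb)) a hla

lemma isFilter_filterGen (X : Set α) : IsFilter (filterGen X) := by
  rw [filterGen_eq]; exact isFilter_prodSet X

lemma filterGen_insert_subset {Q : Set α} (hQ : IsFilter Q) (x : α) :
    filterGen (Q ∪ {x}) ⊆ {a : α | ∃ q ∈ Q, ∃ n : ℕ, q * x ^ n ≤ a} := by
  apply filterGen_subset
  · refine ⟨⟨⊤, ⊤, hQ.top_mem, 0, by simp [rl_le_one]⟩, ?_, ?_⟩
    · rintro a ⟨q1, hq1, n, h1⟩ b ⟨q2, hq2, m, h2⟩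
      refine ⟨q1 * q2, hQ.2.1 _ hq1 _ hq2, n + m, ?_⟩
      calc q1 * q2 * x ^ (n + m) = (q1 * x ^ n) * (q2 * x ^ m) := by
            rw [pow_add, mul_mul_mul_comm]
        _ ≤ a * b := rl_mul_le_mul h1 h2
    · rintro a ⟨q, hq, n, h⟩ b hab
      exact ⟨q, hq, n, h.trans hab⟩
  · rintro a (ha | ha)
    · exact ⟨a, ha, 0, by simp⟩
    · exact ⟨1, hQ.one_mem, 1, by simp [Set.mem_singleton_iff.mp ha]⟩

end Aux2
section Aux3
variable {α : Type*} [ResiduatedLattice α]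

lemma rl_sup_pow_le (x y : α) : ∀ n m : ℕ, (x ⊔ y) ^ (n + m) ≤ x ^ n ⊔ y ^ m := by
  intro n
  induction n with
  | zero =>
      intro m
      rw [pow_zero]
      exact le_trans (rl_le_one _) le_sup_left
  | succ n ihn =>
      intro m
      induction m with
      | zero =>
          rw [pow_zero]
          exact le_trans (rl_le_one _) le_sup_right
      | succ m ihm =>
          have e1 : n + 1 + (m + 1) = (n + (m + 1)) + 1 := by omega
          have e2 : n + (m + 1) = (n + 1) + m := by omega
          rw [e1, pow_succ, rl_mul_sup]
          apply sup_le
          · calc (x ⊔ y) ^ (n + (m + 1)) * x ≤ (x ^ n ⊔ y ^ (m + 1)) * x :=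
                  rl_mul_le_mul_right x (ihn (m + 1))
              _ = x ^ n * x ⊔ y ^ (m + 1) * x := rl_sup_mul _ _ _
              _ ≤ x ^ (n + 1) ⊔ y ^ (m + 1) := by
                  apply sup_le
                  · rw [← pow_succ]; exact le_sup_left
                  · exact (rl_mul_le_left _ _).trans le_sup_right
          · calc (x ⊔ y) ^ (n + (m + 1)) * y = (x ⊔ y) ^ (n + 1 + m) * y := by rw [e2]
              _ ≤ (x ^ (n + 1) ⊔ y ^ m) * y := rl_mul_le_mul_right y ihm
              _ = x ^ (n + 1) * y ⊔ y ^ m * y := rl_sup_mul _ _ _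
              _ ≤ x ^ (n + 1) ⊔ y ^ (m + 1) := by
                  apply sup_le
                  · exact (rl_mul_le_left _ _).trans le_sup_left
                  · rw [← pow_succ]; exact le_sup_right

/-- Prime filter separation: a filter disjoint from a join-closed set extends to a
prime filter still disjoint from it. -/
lemma prime_separation {F C : Set α} (hF : IsFilter F) (hC : IsJoinClosed C)
    (hFC : ∀ c ∈ C, c ∉ F) :
    ∃ P : Set α, IsPrimeFilter P ∧ F ⊆ P ∧ ∀ c ∈ C, c ∉ P := by
  set S : Set (Set α) := {G | IsFilter G ∧ F ⊆ G ∧ ∀ c ∈ C, c ∉ G} with hS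
  have hub : ∀ c ⊆ S, IsChain (· ⊆ ·) c → c.Nonempty → ∃ ub ∈ S, ∀ s ∈ c, s ⊆ ub := by
    intro c hcS hchain hne
    obtain ⟨G0, hG0⟩ := hne
    refine ⟨⋃₀ c, ⟨⟨?_, ?_, ?_⟩, ?_, ?_⟩, fun s hs => Set.subset_sUnion_of_mem hs⟩
    · exact ⟨⊤, G0, hG0, (hcS hG0).1.top_mem⟩
    · rintro a ⟨G1, hG1, ha⟩ b ⟨G2, hG2, hb⟩
      rcases hchain.total hG1 hG2 with h | h
      · exact ⟨G2, hG2, (hcS hG2).1.2.1 a (h ha) b hb⟩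
      · exact ⟨G1, hG1, (hcS hG1).1.2.1 a ha b (h hb)⟩
    · rintro a ⟨G1, hG1, ha⟩ b hab
      exact ⟨G1, hG1, (hcS hG1).1.2.2 a ha b hab⟩
    · exact le_trans (hcS hG0).2.1 (Set.subset_sUnion_of_mem hG0)
    · rintro z hz ⟨G1, hG1, hzG1⟩
      exact (hcS hG1).2.2 z hz hzG1
  obtain ⟨M, hFM, hM⟩ := zorn_subset_nonempty S hub F ⟨hF, le_rfl, hFC⟩
  · obtain ⟨hMfil, hFM', hMC⟩ := hM.prop
    refine ⟨M, ⟨hMfil, ?_, ?_⟩, hFM, hMC⟩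
    · obtain ⟨c, hc⟩ := hC.1
      intro h
      exact hMC c hc (h ▸ Set.mem_univ c)
    · intro x y hxy
      by_contra hcon
      push_neg at hcon
      obtain ⟨hx, hy⟩ := hcon
      -- the filter generated by M ∪ {x} must meet C
      have hmeet : ∀ z : α, z ∉ M → ∃ c ∈ C, c ∈ filterGen (M ∪ {z}) := by
        intro z hz
        by_contra hno
        push_neg at hno
        have hGS : filterGen (M ∪ {z}) ∈ S := by
          refine ⟨isFilter_filterGen _, ?_, hno⟩
          exact le_trans (le_trans hFM' Set.subset_union_left) (subset_filterGen _)
        have hsub : M ⊆ filterGen (M ∪ {z}) :=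
          le_trans Set.subset_union_left (subset_filterGen _)
        exact hz (hM.2 hGS hsub (subset_filterGen _ (Set.mem_union_right _ rfl)))
      obtain ⟨c1, hc1C, hc1⟩ := hmeet x hx
      obtain ⟨c2, hc2C, hc2⟩ := hmeet y hy
      obtain ⟨q1, hq1, n, h1⟩ := filterGen_insert_subset hMfil x hc1
      obtain ⟨q2, hq2, m, h2⟩ := filterGen_insert_subset hMfil y hc2
      have hw : q1 * q2 * (x ⊔ y) ^ (n + m) ∈ M :=
        hMfil.2.1 _ (hMfil.2.1 _ hq1 _ hq2) _ (hMfil.pow_mem hxy (n + m))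
      have hle : q1 * q2 * (x ⊔ y) ^ (n + m) ≤ c1 ⊔ c2 := by
        calc q1 * q2 * (x ⊔ y) ^ (n + m) ≤ q1 * q2 * (x ^ n ⊔ y ^ m) :=
              rl_mul_le_mul le_rfl (rl_sup_pow_le x y n m)
          _ = q1 * q2 * x ^ n ⊔ q1 * q2 * y ^ m := rl_mul_sup _ _ _
          _ ≤ q1 * x ^ n ⊔ q2 * y ^ m := by
              apply sup_le
              · exact le_sup_left.trans' (rl_mul_le_mul_right _ (rl_mul_le_left q1 q2))
              · exact le_sup_right.trans' (rl_mul_le_mul_right _ (rl_mul_le_right q1 q2))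
          _ ≤ c1 ⊔ c2 := sup_le_sup h1 h2
      exact hMC _ (hC.2 c1 hc1C c2 hc2C) (hMfil.2.2 _ hw _ hle)

/-- Every prime filter contains a minimal prime filter. -/
lemma exists_minPrime_subset {P : Set α} (hP : IsPrimeFilter P) :
    ∃ m : Set α, IsMinPrime m ∧ m ⊆ P := by
  set S : Set (Set α) := {Q | IsPrimeFilter Q ∧ Q ⊆ P} with hS
  have hlb : ∀ c ⊆ S, IsChain (· ⊆ ·) c → c.Nonempty → ∃ lb ∈ S, ∀ s ∈ c, lb ⊆ s := by
    intro c hcS hchain hne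
    obtain ⟨Q0, hQ0⟩ := hne
    refine ⟨⋂₀ c, ⟨⟨⟨?_, ?_, ?_⟩, ?_, ?_⟩, ?_⟩, fun s hs => Set.sInter_subset_of_mem hs⟩
    · exact ⟨⊤, fun Q hQ => (hcS hQ).1.1.top_mem⟩
    · intro a ha b hb Q hQ
      exact (hcS hQ).1.1.2.1 a (ha Q hQ) b (hb Q hQ)
    · intro a ha b hab Q hQ
      exact (hcS hQ).1.1.2.2 a (ha Q hQ) b hab
    · intro h
      have : Q0 = Set.univ :=
        Set.eq_univ_of_univ_subset (h ▸ Set.sInter_subset_of_mem hQ0)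
      exact (hcS hQ0).1.2.1 this
    · intro x y hxy
      by_contra hcon
      push_neg at hcon
      obtain ⟨hx, hy⟩ := hcon
      rw [Set.mem_sInter] at hx hy
      push_neg at hx hy
      obtain ⟨Q1, hQ1, hxQ1⟩ := hx
      obtain ⟨Q2, hQ2, hyQ2⟩ := hy
      rcases hchain.total hQ1 hQ2 with h | h
      · rcases (hcS hQ1).1.2.2 x y (Set.mem_sInter.mp hxy Q1 hQ1) with h' | h'
        · exact hxQ1 h'
        · exact hyQ2 (h h')
      · rcases (hcS hQ2).1.2.2 x y (Set.mem_sInter.mp hxy Q2 hQ2) with h' | h'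
        · exact hxQ1 (h h')
        · exact hyQ2 h'
    · exact le_trans (Set.sInter_subset_of_mem hQ0) (hcS hQ0).2
  obtain ⟨m, hmP, hm⟩ := zorn_superset_nonempty S hlb P ⟨hP, le_rfl⟩
  refine ⟨m, ⟨hm.prop.1, fun Q hQ hQm => ?_⟩, hmP⟩
  exact Set.Subset.antisymm hQm (hm.2 ⟨hQ, hQm.trans hmP⟩ hQm)

end Aux3
section Main
variable {α : Type*} [ResiduatedLattice α]

lemma rl_imp_1_2
    (h1 : ∀ P Q : Set α, IsMinPrime P → IsMinPrime Q → P ≠ Q →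
      filterGen (P ∪ Q) = Set.univ) :
    IsNormalRL α := by
  intro P hP
  obtain ⟨m, hm, hmP⟩ := exists_minPrime_subset hP
  refine ⟨m, ⟨hm, hmP⟩, ?_⟩
  rintro m' ⟨hm', hm'P⟩
  by_contra hne
  have hU := h1 m' m hm' hm hne
  have hsub : filterGen (m' ∪ m) ⊆ P :=
    filterGen_subset hP.1 (Set.union_subset hm'P hmP)
  rw [hU] at hsub
  exact hP.2.1 (Set.eq_univ_of_univ_subset hsub)

lemma rl_imp_2_1 (h2 : IsNormalRL α) :
    ∀ P Q : Set α, IsMinPrime P → IsMinPrime Q → P ≠ Q →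
      filterGen (P ∪ Q) = Set.univ := by
  intro P Q hP hQ hne
  by_contra hG
  have hfil := isFilter_filterGen (P ∪ Q)
  have hbot : ∀ c ∈ ({⊥} : Set α), c ∉ filterGen (P ∪ Q) := by
    rintro c rfl h
    exact hG (hfil.eq_univ_of_bot_mem h)
  obtain ⟨R, hR, hGR, hRC⟩ :=
    prime_separation (C := ({⊥} : Set α)) hfil ⟨⟨⊥, rfl⟩, by rintro a rfl b rfl; simp⟩ hbot
  have hPR : P ⊆ R :=
    le_trans (le_trans Set.subset_union_left (subset_filterGen _)) hGR
  have hQR : Q ⊆ R :=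
    le_trans (le_trans Set.subset_union_right (subset_filterGen _)) hGR
  obtain ⟨mu, hmu1, hmu2⟩ := h2 R hR
  exact hne ((hmu2 P ⟨hP, hPR⟩).trans (hmu2 Q ⟨hQ, hQR⟩).symm)

lemma rl_imp_3_2
    (h3 : ∀ P : Set α, IsPrimeFilter P → IsPrimeFilter (unitDivisors P)) :
    IsNormalRL α := by
  intro P hP
  have hDP : unitDivisors P ⊆ P := by
    rintro a ⟨x, hx, hxa⟩
    rcases hP.2.2 x a (by rw [hxa]; exact hP.1.top_mem) with h | h
    · exact absurd h hx
    · exact h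
  have hDQ : ∀ Q : Set α, IsPrimeFilter Q → Q ⊆ P → unitDivisors P ⊆ Q := by
    rintro Q hQ hQP a ⟨x, hx, hxa⟩
    rcases hQ.2.2 x a (by rw [hxa]; exact hQ.1.top_mem) with h | h
    · exact absurd (hQP h) hx
    · exact h
  have hDprime := h3 P hP
  refine ⟨unitDivisors P, ⟨⟨hDprime, fun Q hQ hQD => ?_⟩, hDP⟩, ?_⟩
  · exact Set.Subset.antisymm hQD (hDQ Q hQ (hQD.trans hDP))
  · rintro m ⟨⟨hmPr, hmMin⟩, hmP⟩
    exact (hmMin _ hDprime (hDQ m hmPr hmP)).symm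

lemma rl_imp_5_3
    (h5 : ∀ x y : α, x ⊔ y = ⊤ →
      ∃ u ∈ coannulet x, ∃ v ∈ coannulet y, u * v = (⊥ : α)) :
    ∀ P : Set α, IsPrimeFilter P → IsPrimeFilter (unitDivisors P) := by
  intro P hP
  obtain ⟨x0, hx0⟩ := (Set.ne_univ_iff_exists_notMem _).mp hP.2.1
  have hWitness : ∀ {x w : α}, x ∉ P → x ⊔ w = ⊤ → w ∈ P := by
    intro x w hx hxw
    rcases hP.2.2 x w (by rw [hxw]; exact hP.1.top_mem) with h | h
    · exact absurd h hx
    · exact h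
  have haux : ∀ {p q r : α}, p ⊔ q = ⊤ → (q ⊔ r) ⊔ p = ⊤ := by
    intro p q r h
    apply le_antisymm le_top
    rw [← h]
    exact sup_le le_sup_right (le_trans le_sup_left le_sup_left)
  refine ⟨⟨⟨⊤, x0, hx0, by simp⟩, ?_, ?_⟩, ?_, ?_⟩
  · rintro a ⟨x, hx, hxa⟩ b ⟨y, hy, hyb⟩
    obtain ⟨u, hu, w, hw, huw⟩ := h5 a x (by rw [sup_comm]; exact hxa)
    obtain ⟨u', hu', w', hw', hu'w'⟩ := h5 b y (by rw [sup_comm]; exact hyb)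
    have hunp : u ∉ P := by
      intro hmem
      have hwP : w ∈ P := hWitness hx hw
      have : u * w ∈ P := hP.1.2.1 u hmem w hwP
      rw [huw] at this
      exact hP.bot_not_mem this
    have hu'np : u' ∉ P := by
      intro hmem
      have hwP : w' ∈ P := hWitness hy hw'
      have : u' * w' ∈ P := hP.1.2.1 u' hmem w' hwP
      rw [hu'w'] at this
      exact hP.bot_not_mem this
    have hjoin : u ⊔ u' ∉ P := fun hmem => (hP.2.2 u u' hmem).elim hunp hu'np
    refine ⟨u ⊔ u', hjoin, rl_sup_mul_top ?_ ?_⟩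
    · exact haux hu
    · rw [sup_comm u u']
      exact haux hu'
  · rintro a ⟨x, hx, hxa⟩ b hab
    exact ⟨x, hx, le_antisymm le_top (by rw [← hxa]; exact sup_le_sup_left hab x)⟩
  · intro h
    have : (⊥ : α) ∈ unitDivisors P := by rw [h]; trivial
    obtain ⟨x, hx, hxbot⟩ := this
    rw [sup_bot_eq] at hxbot
    rw [hxbot] at hx
    exact hx hP.1.top_mem
  · rintro a b ⟨x, hx, hxab⟩
    have h' : (x ⊔ a) ⊔ b = ⊤ := by rw [sup_assoc]; exact hxab
    obtain ⟨u, hu, v, hv, huv⟩ := h5 (x ⊔ a) b h'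
    by_cases hvP : v ∈ P
    · have hunp : u ∉ P := by
        intro hmem
        have : u * v ∈ P := hP.1.2.1 u hmem v hvP
        rw [huv] at this
        exact hP.bot_not_mem this
      have hxu : x ⊔ u ∉ P := fun hmem => (hP.2.2 x u hmem).elim hx hunp
      left
      refine ⟨x ⊔ u, hxu, ?_⟩
      rw [sup_right_comm]
      exact hu
    · right
      exact ⟨v, hvP, by rw [sup_comm]; exact hv⟩

end Main
section Main2
variable {α : Type*} [ResiduatedLattice α]

lemma rl_imp_2_4 (h2 : IsNormalRL α) :
    ∀ x y : α, x ⊔ y = ⊤ → filterGen (coannulet x ∪ coannulet y) = Set.univ := by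
  intro x y hxy
  by_cases hxT : x = ⊤
  · apply Set.eq_univ_of_univ_subset
    calc Set.univ = coannulet x := by rw [hxT, coannulet_top]
      _ ⊆ _ := le_trans Set.subset_union_left (subset_filterGen _)
  by_cases hyT : y = ⊤
  · apply Set.eq_univ_of_univ_subset
    calc Set.univ = coannulet y := by rw [hyT, coannulet_top]
      _ ⊆ _ := le_trans Set.subset_union_right (subset_filterGen _)
  by_contra hG
  have hfil := isFilter_filterGen (coannulet x ∪ coannulet y)
  have hbot : ∀ c ∈ ({⊥} : Set α), c ∉ filterGen (coannulet x ∪ coannulet y) := by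
    rintro c rfl h
    exact hG (hfil.eq_univ_of_bot_mem h)
  obtain ⟨R, hR, hGR, hRC⟩ :=
    prime_separation (C := ({⊥} : Set α)) hfil
      ⟨⟨⊥, rfl⟩, by rintro a rfl b rfl; simp⟩ hbot
  have hxR : coannulet x ⊆ R :=
    le_trans (le_trans Set.subset_union_left (subset_filterGen _)) hGR
  have hyR : coannulet y ⊆ R :=
    le_trans (le_trans Set.subset_union_right (subset_filterGen _)) hGR
  have key : ∀ z : α, z ≠ ⊤ → coannulet z ⊆ R →
      ∃ Q : Set α, IsPrimeFilter Q ∧ Q ⊆ R ∧ z ∉ Q := by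
    intro z hzT hzR
    set C : Set α := {c | c = z ∨ ∃ r, r ∉ R ∧ c = z ⊔ r} with hC
    have hCjc : IsJoinClosed C := by
      refine ⟨⟨z, Or.inl rfl⟩, ?_⟩
      rintro a (rfl | ⟨r, hr, rfl⟩) b (rfl | ⟨s, hs, rfl⟩)
      · left; exact sup_idem _
      · right; exact ⟨s, hs, by rw [← sup_assoc, sup_idem]⟩
      · right; exact ⟨r, hr, by rw [sup_right_comm, sup_idem]⟩
      · right
        refine ⟨r ⊔ s, fun hmem => ?_, ?_⟩
        · rcases hR.2.2 r s hmem with h | h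
          · exact hr h
          · exact hs h
        · rw [sup_sup_sup_comm, sup_idem]
    have hdisj : ∀ c ∈ C, c ∉ coannulet z := by
      rintro c (rfl | ⟨r, hr, rfl⟩) hmem
      · rw [mem_coannulet, sup_idem] at hmem
        exact hzT hmem
      · rw [mem_coannulet, ← sup_assoc, sup_idem] at hmem
        exact hr (hzR hmem)
    obtain ⟨Q, hQ, hQz, hQC⟩ := prime_separation (isFilter_coannulet z) hCjc hdisj
    refine ⟨Q, hQ, ?_, fun hmem => hQC z (Or.inl rfl) hmem⟩
    intro q hq
    by_contra hqR
    exact hQC (z ⊔ q) (Or.inr ⟨q, hqR, rfl⟩) (hQ.1.2.2 q hq _ le_sup_right)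
  obtain ⟨Qx, hQx, hQxR, hxQx⟩ := key x hxT hxR
  obtain ⟨Qy, hQy, hQyR, hyQy⟩ := key y hyT hyR
  obtain ⟨mx, hmx, hmxQx⟩ := exists_minPrime_subset hQx
  obtain ⟨my, hmy, hmyQy⟩ := exists_minPrime_subset hQy
  have hymx : y ∈ mx := by
    rcases hmx.1.2.2 x y (by rw [hxy]; exact hmx.1.1.top_mem) with h | h
    · exact absurd (hmxQx h) hxQx
    · exact h
  have hymy : y ∉ my := fun h => hyQy (hmyQy h)
  obtain ⟨mu, hmu1, hmu2⟩ := h2 R hR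
  have e1 : mx = mu := hmu2 mx ⟨hmx, hmxQx.trans hQxR⟩
  have e2 : my = mu := hmu2 my ⟨hmy, hmyQy.trans hQyR⟩
  rw [e1, ← e2] at hymx
  exact hymy hymx

lemma rl_imp_4_5
    (h4 : ∀ x y : α, x ⊔ y = ⊤ → filterGen (coannulet x ∪ coannulet y) = Set.univ) :
    ∀ x y : α, x ⊔ y = ⊤ →
      ∃ u ∈ coannulet x, ∃ v ∈ coannulet y, u * v = (⊥ : α) := by
  intro x y hxy
  have hbot : (⊥ : α) ∈ filterGen (coannulet x ∪ coannulet y) := by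
    rw [h4 x y hxy]; trivial
  rw [filterGen_eq] at hbot
  obtain ⟨l, hl, hlb⟩ := hbot
  have aux : ∀ l : List α, (∀ b ∈ l, b ∈ coannulet x ∪ coannulet y) →
      ∃ u ∈ coannulet x, ∃ v ∈ coannulet y, u * v ≤ l.prod := by
    intro l
    induction l with
    | nil =>
        intro _
        refine ⟨⊤, top_mem_coannulet x, ⊤, top_mem_coannulet y, ?_⟩
        rw [List.prod_nil]
        exact rl_le_one _
    | cons b t ih =>
        intro hmem
        obtain ⟨u, hu, v, hv, hle⟩ := ih fun c hc => hmem c (by simp [hc])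
        rcases hmem b (by simp) with hb | hb
        · refine ⟨b * u, (isFilter_coannulet x).2.1 b hb u hu, v, hv, ?_⟩
          rw [List.prod_cons, mul_assoc]
          exact rl_mul_le_mul le_rfl hle
        · refine ⟨u, hu, b * v, (isFilter_coannulet y).2.1 b hb v hv, ?_⟩
          rw [List.prod_cons]
          calc u * (b * v) = b * (u * v) := mul_left_comm u b v
            _ ≤ b * t.prod := rl_mul_le_mul le_rfl hle
  obtain ⟨u, hu, v, hv, hle⟩ := aux l hl
  exact ⟨u, hu, v, hv, le_bot_iff.mp (hle.trans hlb)⟩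

lemma rl_imp_5_6
    (h5 : ∀ x y : α, x ⊔ y = ⊤ →
      ∃ u ∈ coannulet x, ∃ v ∈ coannulet y, u * v = (⊥ : α)) :
    ∀ x y : α, coannulet (x ⊔ y) = filterGen (coannulet x ∪ coannulet y) := by
  intro x y
  apply Set.Subset.antisymm
  · intro a ha
    rw [mem_coannulet] at ha
    have h' : (x ⊔ a) ⊔ (y ⊔ a) = ⊤ := by
      rw [sup_sup_sup_comm, sup_idem]; exact ha
    obtain ⟨u, hu, v, hv, huv⟩ := h5 (x ⊔ a) (y ⊔ a) h'
    have hau : a ⊔ u ∈ coannulet x := by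
      rw [mem_coannulet, ← sup_assoc]; exact hu
    have hav : a ⊔ v ∈ coannulet y := by
      rw [mem_coannulet, ← sup_assoc]; exact hv
    have hprod : (a ⊔ u) * (a ⊔ v) ≤ a := by
      rw [rl_mul_sup]
      apply sup_le (rl_mul_le_right _ _)
      rw [rl_sup_mul]
      apply sup_le (rl_mul_le_left _ _)
      rw [huv]
      exact bot_le
    rw [filterGen_eq]
    refine ⟨[a ⊔ u, a ⊔ v], ?_, ?_⟩
    · intro b hb
      rcases List.mem_cons.mp hb with rfl | hb'
      · exact Or.inl hau
      rcases List.mem_cons.mp hb' with rfl | hb''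
      · exact Or.inr hav
      · exact absurd hb'' List.not_mem_nil
    · rw [List.prod_cons, List.prod_cons, List.prod_nil, mul_one]
      exact hprod
  · exact filterGen_subset (isFilter_coannulet (x ⊔ y))
      (Set.union_subset (coannulet_subset_sup_left x y) (coannulet_subset_sup_right x y))

lemma rl_imp_6_7
    (h6 : ∀ x y : α, coannulet (x ⊔ y) = filterGen (coannulet x ∪ coannulet y)) :
    ∀ x y : α, coannulet (x ⊔ y) = Set.univ →
      filterGen (coannulet x ∪ coannulet y) = Set.univ :=
  fun x y h => (h6 x y).symm.trans h

lemma rl_imp_7_4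
    (h7 : ∀ x y : α, coannulet (x ⊔ y) = Set.univ →
      filterGen (coannulet x ∪ coannulet y) = Set.univ) :
    ∀ x y : α, x ⊔ y = ⊤ → filterGen (coannulet x ∪ coannulet y) = Set.univ := by
  intro x y hxy
  apply h7
  rw [hxy]
  exact coannulet_top

end Main2
/-- Corollary 4.6: the seven characterizations of normality are
equivalent. -/
theorem stmt_18 (α : Type*) [ResiduatedLattice α] :
    List.TFAE [
      (∀ P Q : Set α, IsMinPrime P → IsMinPrime Q → P ≠ Q →
        filterGen (P ∪ Q) = Set.univ),
      IsNormalRL α,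
      (∀ P : Set α, IsPrimeFilter P → IsPrimeFilter (unitDivisors P)),
      (∀ x y : α, x ⊔ y = ⊤ → filterGen (coannulet x ∪ coannulet y) = Set.univ),
      (∀ x y : α, x ⊔ y = ⊤ →
        ∃ u ∈ coannulet x, ∃ v ∈ coannulet y, u * v = (⊥ : α)),
      (∀ x y : α, coannulet (x ⊔ y) = filterGen (coannulet x ∪ coannulet y)),
      (∀ x y : α, coannulet (x ⊔ y) = Set.univ →
        filterGen (coannulet x ∪ coannulet y) = Set.univ) ] := by
  tfae_have 1 → 2 := rl_imp_1_2
  tfae_have 2 → 1 := rl_imp_2_1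
  tfae_have 2 → 4 := rl_imp_2_4
  tfae_have 4 → 5 := rl_imp_4_5
  tfae_have 5 → 6 := rl_imp_5_6
  tfae_have 6 → 7 := rl_imp_6_7
  tfae_have 7 → 4 := rl_imp_7_4
  tfae_have 5 → 3 := rl_imp_5_3
  tfae_have 3 → 2 := rl_imp_3_2
  tfae_finish
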